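/- Let h : ℝ → ℝ ∪ {-∞} be increasing and concave with h(x) > -∞, and let c = h'(x-) < ∞. For w ∈ [0,∞) define h_w(y) = h(x) + c(y-x) for y ≤ x+w and h_w(y) = h(y) + h(x) + cw - h(x+w) for y > x+w. Then: (a) h_w(y) ≥ h(y) for all y; (b) h_w(x) = h(x); (c) h_w is increasing, concave, and continuous; and (d) for 0 ≤ w₁ < w₂, 0 ≤ h_{w₂}(y) - h_{w₁}(y) ≤ h(x+w₁) + c(w₂-w₁) - h(x+w₂) for all y. -/

import Mathlib

open Filter Set

private lemma ereal_sub_finite8 {a b : EReal} (ha : a ≠ ⊥) (hT : a - b ≠ ⊤) (hB : a - b ≠ ⊥) :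
    a ≠ ⊤ ∧ b ≠ ⊥ ∧ b ≠ ⊤ := by
  induction a using EReal.rec <;> induction b using EReal.rec <;> simp_all [sub_eq_add_neg]

/-- The real-valued version of the modified function. -/
noncomputable def G8 (H : ℝ → ℝ) (x c w : ℝ) (y : ℝ) : ℝ :=
  if y ≤ x + w then H x + c * (y - x) else H y + (H x + c * w - H (x + w))

set_option maxHeartbeats 2000000 in
/-- Let `h : ℝ → EReal` be nondecreasing and concave with
`h x ≠ -∞`, and let `c = h'(x-) < ∞` be the (finite) left derivative of `h`
at `x`.  For `w ∈ [0,∞)` define `h_w(y) = h(x) + c(y-x)` for `y ≤ x+w` and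
`h_w(y) = h(y) + h(x) + cw - h(x+w)` for `y > x+w`. Then:
(a) `h_w ≥ h`; (b) `h_w(x) = h(x)`; (c) `h_w` is nondecreasing, concave and
continuous; (d) for `0 ≤ w₁ < w₂` and all `y`,
`0 ≤ h_{w₂}(y) - h_{w₁}(y) ≤ h(x+w₁) + c(w₂-w₁) - h(x+w₂)`. -/
theorem stmt8 (h : ℝ → EReal)
    (hmono : Monotone h)
    (hconc : ∀ a b θ : ℝ, 0 < θ → θ < 1 →
      (θ : EReal) * h a + ((1 - θ : ℝ) : EReal) * h b ≤ h (θ * a + (1 - θ) * b))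
    (x : ℝ) (hx : h x ≠ ⊥)
    (c : ℝ)
    (hc : Tendsto (fun ε : ℝ => ((1 / ε : ℝ) : EReal) * (h x - h (x - ε)))
      (nhdsWithin 0 (Set.Ioi 0)) (nhds ((c : ℝ) : EReal)))
    (hw : ℝ → ℝ → EReal)
    (hwdef : ∀ w y : ℝ, hw w y =
      if y ≤ x + w then h x + ((c * (y - x) : ℝ) : EReal)
      else h y + h x + ((c * w : ℝ) : EReal) - h (x + w)) :
    (∀ w : ℝ, 0 ≤ w → ∀ y : ℝ, h y ≤ hw w y) ∧
    (∀ w : ℝ, 0 ≤ w → hw w x = h x) ∧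
    (∀ w : ℝ, 0 ≤ w →
      Monotone (hw w) ∧
      (∀ a b θ : ℝ, 0 < θ → θ < 1 →
        (θ : EReal) * hw w a + ((1 - θ : ℝ) : EReal) * hw w b
          ≤ hw w (θ * a + (1 - θ) * b)) ∧
      Continuous (hw w)) ∧
    (∀ w₁ w₂ : ℝ, 0 ≤ w₁ → w₁ < w₂ → ∀ y : ℝ,
      0 ≤ hw w₂ y - hw w₁ y ∧
      hw w₂ y - hw w₁ y ≤ h (x + w₁) + ((c * (w₂ - w₁) : ℝ) : EReal) - h (x + w₂)) := by
  have hBotle : ∀ p q : ℝ, p ≤ q → h p ≠ ⊥ → h q ≠ ⊥ := by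
    intro p q hpq hp heq
    exact hp (le_bot_iff.mp (heq ▸ hmono hpq))
  -- Step 1: find ε₁ > 0 at which the difference quotient is finite.
  have hev1 := hc.eventually_lt_const
    (show ((c : ℝ) : EReal) < ((c + 1 : ℝ) : EReal) from by exact_mod_cast lt_add_one c)
  have hev2 := hc.eventually_const_lt
    (show ((c - 1 : ℝ) : EReal) < ((c : ℝ) : EReal) from by exact_mod_cast sub_one_lt c)
  obtain ⟨ε₁, hlt, hgt, hε₁mem⟩ := (hev1.and (hev2.and eventually_mem_nhdsWithin)).exists
  have hε₁pos : (0 : ℝ) < ε₁ := hε₁mem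
  have hDT : h x - h (x - ε₁) ≠ ⊤ := by
    intro hD
    rw [hD, EReal.mul_top_of_pos (EReal.coe_pos.mpr (one_div_pos.mpr hε₁pos))] at hlt
    exact not_top_lt hlt
  have hDB : h x - h (x - ε₁) ≠ ⊥ := by
    intro hD
    rw [hD, EReal.mul_bot_of_pos (EReal.coe_pos.mpr (one_div_pos.mpr hε₁pos))] at hgt
    exact not_lt_bot hgt
  obtain ⟨hxT, huB, huT⟩ := ereal_sub_finite8 hx hDT hDB
  -- Step 2: h is nowhere ⊤.
  have hTop : ∀ y, h y ≠ ⊤ := by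
    intro y hy
    rcases le_or_gt y x with hyx | hxy
    · exact hxT (top_le_iff.mp (hy ▸ hmono hyx))
    · have hd : 0 < y - x + ε₁ := by linarith
      have hθ0 : 0 < (y - x) / (y - x + ε₁) := div_pos (by linarith) hd
      have hθ1 : (y - x) / (y - x + ε₁) < 1 := (div_lt_one hd).mpr (by linarith)
      have hcc := hconc (x - ε₁) y _ hθ0 hθ1
      rw [hy] at hcc
      rw [show (y - x) / (y - x + ε₁) * (x - ε₁) + (1 - (y - x) / (y - x + ε₁)) * y = x from by
        field_simp; ring] at hcc
      rw [← EReal.coe_toReal huT huB,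
        EReal.mul_top_of_pos (EReal.coe_pos.mpr (by linarith : (0:ℝ) < 1 - (y - x) / (y - x + ε₁))),
        ← EReal.coe_mul, EReal.coe_add_top] at hcc
      exact hxT (top_le_iff.mp hcc)
  -- Step 3: the real-valued version
  set H : ℝ → ℝ := fun y => (h y).toReal with hH
  have hfin' : ∀ y, h y ≠ ⊥ → h y = ((H y : ℝ) : EReal) := by
    intro y hb
    simp only [hH]
    exact (EReal.coe_toReal (hTop y) hb).symm
  have HmonoR : ∀ p q : ℝ, p ≤ q → h p ≠ ⊥ → H p ≤ H q := by
    intro p q hpq hp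
    have := hmono hpq
    rw [hfin' p hp, hfin' q (hBotle p q hpq hp)] at this
    exact_mod_cast this
  have realconc : ∀ p q θ : ℝ, 0 < θ → θ < 1 → h p ≠ ⊥ → h q ≠ ⊥ →
      θ * H p + (1 - θ) * H q ≤ H (θ * p + (1 - θ) * q) := by
    intro p q θ hθ0 hθ1 hp hq
    have hmin : min p q ≤ θ * p + (1 - θ) * q := by
      rcases le_total p q with hpq | hpq
      · rw [min_eq_left hpq]; nlinarith
      · rw [min_eq_right hpq]; nlinarith
    have hmid : h (θ * p + (1 - θ) * q) ≠ ⊥ := by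
      rcases le_total p q with hpq | hpq
      · exact hBotle _ _ (by rwa [min_eq_left hpq] at hmin) hp
      · exact hBotle _ _ (by rwa [min_eq_right hpq] at hmin) hq
    have := hconc p q θ hθ0 hθ1
    rw [hfin' p hp, hfin' q hq, hfin' _ hmid] at this
    exact_mod_cast this
  -- Step 4: cleared-denominator chord inequality
  have chord : ∀ a m b : ℝ, h a ≠ ⊥ → a < m → m < b →
      (b - m) * H a + (m - a) * H b ≤ (b - a) * H m := by
    intro a m b ha ham hmb
    have hba : (0:ℝ) < b - a := by linarith
    have hθ0 : 0 < (b - m) / (b - a) := div_pos (by linarith) hba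
    have hθ1 : (b - m) / (b - a) < 1 := (div_lt_one hba).mpr (by linarith)
    have key := realconc a b _ hθ0 hθ1 ha (hBotle a b (by linarith) ha)
    rw [show (b - m) / (b - a) * a + (1 - (b - m) / (b - a)) * b = m from by
      field_simp; ring] at key
    have h2 := mul_le_mul_of_nonneg_left key (le_of_lt hba)
    have e : (b - a) * ((b - m) / (b - a) * H a + (1 - (b - m) / (b - a)) * H b)
        = (b - m) * H a + (m - a) * H b := by field_simp; ring
    rw [e] at h2
    exact h2
  -- Step 5: the real limit
  have hL4 : Tendsto (fun ε => (H x - H (x - ε)) / ε) (nhdsWithin 0 (Set.Ioi 0)) (nhds c) := by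
    rw [← EReal.tendsto_coe]
    refine Tendsto.congr' ?_ hc
    filter_upwards [Ioo_mem_nhdsGT_of_mem (show (0:ℝ) ∈ Ico 0 ε₁ from ⟨le_refl _, hε₁pos⟩)]
      with ε hε
    rw [hfin' x hx, hfin' (x - ε) (hBotle (x - ε₁) (x - ε) (by linarith [hε.2]) huB)]
    rw [← EReal.coe_sub, ← EReal.coe_mul, one_div_mul_eq_div]
  have hc0 : 0 ≤ c := by
    refine ge_of_tendsto hL4 ?_
    filter_upwards [Ioo_mem_nhdsGT_of_mem (show (0:ℝ) ∈ Ico 0 ε₁ from ⟨le_refl _, hε₁pos⟩)]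
      with ε hε
    have := HmonoR (x - ε) x (by linarith [hε.1]) (hBotle (x - ε₁) (x - ε) (by linarith [hε.2]) huB)
    exact div_nonneg (by linarith) hε.1.le
  -- Step 6: tangent line inequality
  have tanR : ∀ y, x < y → H y ≤ H x + c * (y - x) := by
    intro y hy
    have key : (H y - H x) / (y - x) ≤ c := by
      refine ge_of_tendsto hL4 ?_
      filter_upwards [Ioo_mem_nhdsGT_of_mem (show (0:ℝ) ∈ Ico 0 ε₁ from ⟨le_refl _, hε₁pos⟩)]
        with ε hε
      rw [div_le_div_iff₀ (by linarith : (0:ℝ) < y - x) hε.1]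
      have hch := chord (x - ε) x y (hBotle (x - ε₁) (x - ε) (by linarith [hε.2]) huB)
        (by linarith [hε.1]) hy
      nlinarith [hch]
    have := (div_le_iff₀ (by linarith : (0:ℝ) < y - x)).mp key
    linarith
  have tanL : ∀ y, y < x → h y ≠ ⊥ → H y ≤ H x + c * (y - x) := by
    intro y hy hb
    have key : c ≤ (H x - H y) / (x - y) := by
      refine le_of_tendsto hL4 ?_
      filter_upwards [Ioo_mem_nhdsGT_of_mem
        (show (0:ℝ) ∈ Ico 0 (min ε₁ (x - y)) from ⟨le_refl _, lt_min hε₁pos (by linarith)⟩)]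
        with ε hε
      have hε1 : ε < ε₁ := lt_of_lt_of_le hε.2 (min_le_left _ _)
      have hε2 : ε < x - y := lt_of_lt_of_le hε.2 (min_le_right _ _)
      rw [div_le_div_iff₀ hε.1 (by linarith : (0:ℝ) < x - y)]
      have hch := chord y (x - ε) x hb (by linarith) (by linarith [hε.1])
      nlinarith [hch]
    have := (le_div_iff₀ (by linarith : (0:ℝ) < x - y)).mp key
    linarith
  have T : ∀ y, h y ≤ ((H x + c * (y - x) : ℝ) : EReal) := by
    intro y
    rcases lt_trichotomy y x with hlt | heq | hgt
    · rcases eq_or_ne (h y) ⊥ with hb | hb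
      · rw [hb]; exact bot_le
      · rw [hfin' y hb]; exact_mod_cast tanL y hlt hb
    · subst heq
      rw [hfin' y hx]
      exact_mod_cast le_of_eq (by ring)
    · rw [hfin' y (hBotle x y hgt.le hx)]; exact_mod_cast tanR y hgt
  -- Step 7: general tangent inequality at points to the right of x
  have T2 : ∀ p q : ℝ, x ≤ p → p ≤ q → H q ≤ H p + c * (q - p) := by
    intro p q hxp hpq
    rcases eq_or_lt_of_le hpq with rfl | hpq'
    · have : c * (p - p) = 0 := by ring
      linarith
    rcases eq_or_lt_of_le hxp with rfl | hxp'
    · exact tanR q hpq'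
    · have hch := chord x p q hx hxp' hpq'
      have ht := tanR p hxp'
      have h3 := mul_le_mul_of_nonneg_left ht (by linarith : (0:ℝ) ≤ q - p)
      have h4 : (p - x) * H q ≤ (p - x) * (H p + c * (q - p)) := by nlinarith [hch, h3]
      exact le_of_mul_le_mul_left h4 (by linarith)
  -- Step 8: the real description of hw
  have hwG : ∀ w : ℝ, 0 ≤ w → ∀ y : ℝ, hw w y = ((G8 H x c w y : ℝ) : EReal) := by
    intro w hw0 y
    rw [hwdef]
    by_cases hy : y ≤ x + w
    · simp only [G8, if_pos hy]
      rw [hfin' x hx]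
      norm_cast
    · simp only [G8, if_neg hy]
      push_neg at hy
      rw [hfin' x hx, hfin' y (hBotle x y (by linarith) hx),
        hfin' (x + w) (hBotle x (x + w) (by linarith) hx)]
      norm_cast
      ring
  refine ⟨?_, ?_, ?_, ?_⟩
  -- (a)
  · intro w hw0 y
    rw [hwG w hw0 y]
    by_cases hy : y ≤ x + w
    · simp only [G8, if_pos hy]; exact T y
    · simp only [G8, if_neg hy]
      push_neg at hy
      rw [hfin' y (hBotle x y (by linarith) hx)]
      have ht := T2 x (x + w) le_rfl (by linarith)
      apply EReal.coe_le_coe_iff.mpr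
      nlinarith [ht]
  -- (b)
  · intro w hw0
    rw [hwdef, if_pos (by linarith : x ≤ x + w)]
    simp
  -- (c)
  · intro w hw0
    have gc : ∀ a b θ : ℝ, 0 < θ → θ < 1 →
        θ * G8 H x c w a + (1 - θ) * G8 H x c w b ≤ G8 H x c w (θ * a + (1 - θ) * b) := by
      have mixed : ∀ a b θ : ℝ, 0 < θ → θ < 1 → a ≤ x + w → x + w < b →
          θ * G8 H x c w a + (1 - θ) * G8 H x c w b ≤ G8 H x c w (θ * a + (1 - θ) * b) := by
        intro a b θ h0 h1 ha hb
        have hab : a < b := by linarith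
        have hm1 : θ * a + (1 - θ) * b < b := by nlinarith
        simp only [G8, if_pos ha, if_neg (not_le.mpr hb)]
        by_cases hm : θ * a + (1 - θ) * b ≤ x + w
        · rw [if_pos hm]
          have ht := T2 (x + w) b (by linarith) (by linarith)
          nlinarith [mul_le_mul_of_nonneg_left ht (by linarith : (0:ℝ) ≤ 1 - θ)]
        · rw [if_neg hm]
          push_neg at hm
          have hd : (0:ℝ) < b - (x + w) := by linarith
          have hch := chord (x + w) (θ * a + (1 - θ) * b) b
            (hBotle x (x + w) (by linarith) hx) hm hm1
          have ht := T2 (x + w) b (by linarith) (by linarith)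
          have hp : 0 ≤ θ * ((x + w - a) * ((H (x + w) + c * (b - (x + w))) - H b)) :=
            mul_nonneg h0.le (mul_nonneg (by linarith) (by linarith))
          have key : (b - (x + w)) * (θ * (H x + c * (a - x))
                + (1 - θ) * (H b + (H x + c * w - H (x + w))))
              ≤ (b - (x + w)) * (H (θ * a + (1 - θ) * b) + (H x + c * w - H (x + w))) := by
            nlinarith [hch, hp]
          exact le_of_mul_le_mul_left key hd
      intro a b θ h0 h1
      rcases le_or_gt a (x + w) with ha | ha <;> rcases le_or_gt b (x + w) with hb | hb
      · have hm : θ * a + (1 - θ) * b ≤ x + w := by nlinarith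
        simp only [G8, if_pos ha, if_pos hb, if_pos hm]
        exact le_of_eq (by ring)
      · exact mixed a b θ h0 h1 ha hb
      · have := mixed b a (1 - θ) (by linarith) (by linarith) hb ha
        rw [show (1 - θ) * b + (1 - (1 - θ)) * a = θ * a + (1 - θ) * b from by ring] at this
        nlinarith [this]
      · have hm : x + w < θ * a + (1 - θ) * b := by nlinarith
        simp only [G8, if_neg (not_le.mpr ha), if_neg (not_le.mpr hb), if_neg (not_le.mpr hm)]
        have := realconc a b θ h0 h1 (hBotle x a (by linarith) hx) (hBotle x b (by linarith) hx)
        nlinarith [this]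
    refine ⟨?_, ?_, ?_⟩
    · -- Monotone
      intro a b hab
      rw [hwG w hw0 a, hwG w hw0 b]
      apply EReal.coe_le_coe_iff.mpr
      by_cases ha : a ≤ x + w <;> by_cases hb : b ≤ x + w
      · simp only [G8, if_pos ha, if_pos hb]
        nlinarith [mul_le_mul_of_nonneg_left (show a - x ≤ b - x from by linarith) hc0]
      · simp only [G8, if_pos ha, if_neg hb]
        push_neg at hb
        have h1 : H (x + w) ≤ H b := HmonoR (x + w) b (by linarith)
          (hBotle x (x + w) (by linarith) hx)
        nlinarith [mul_le_mul_of_nonneg_left (show a - x ≤ w from by linarith) hc0]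
      · exact (ha (le_trans hab hb)).elim
      · simp only [G8, if_neg ha, if_neg hb]
        push_neg at ha
        have := HmonoR a b hab (hBotle x a (by linarith) hx)
        linarith
    · -- Concavity
      intro a b θ h0 h1
      rw [hwG w hw0 a, hwG w hw0 b, hwG w hw0 (θ * a + (1 - θ) * b)]
      exact_mod_cast gc a b θ h0 h1
    · -- Continuity
      have heq : hw w = fun y => (((if y ≤ x + w then H x + c * (y - x)
          else H (max y x) + (H x + c * w - H (x + w))) : ℝ) : EReal) := by
        funext y
        rw [hwG w hw0 y]
        simp only [G8]
        by_cases hy : y ≤ x + w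
        · rw [if_pos hy, if_pos hy]
        · rw [if_neg hy, if_neg hy, max_eq_left (by push_neg at hy; linarith : x ≤ y)]
      rw [heq]
      have hConcOn : ConcaveOn ℝ (Ioi (x - ε₁)) H := by
        refine ⟨convex_Ioi _, ?_⟩
        intro p hp q hq α β hα hβ hαβ
        rcases eq_or_lt_of_le hα with rfl | hα'
        · have hβ1 : β = 1 := by linarith
          subst hβ1; simp
        rcases eq_or_lt_of_le hβ with rfl | hβ'
        · have hα1 : α = 1 := by linarith
          subst hα1; simp
        · have hβ1 : β = 1 - α := by linarith
          subst hβ1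
          simp only [smul_eq_mul]
          exact realconc p q α hα' (by linarith)
            (hBotle _ _ (le_of_lt hp) huB) (hBotle _ _ (le_of_lt hq) huB)
      have hHcont : ContinuousOn H (Ioi (x - ε₁)) := hConcOn.continuousOn isOpen_Ioi
      have hF : Continuous (fun y : ℝ => if y ≤ x + w then H x + c * (y - x)
          else H (max y x) + (H x + c * w - H (x + w))) := by
        refine Continuous.if_le ?_ ?_ continuous_id continuous_const ?_
        · fun_prop
        · refine Continuous.add ?_ continuous_const
          exact hHcont.comp_continuous (continuous_id.max continuous_const)
            (fun y => lt_of_lt_of_le (by linarith : x - ε₁ < x) (le_max_right y x))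
        · intro y hy
          change y = x + w at hy
          subst hy
          rw [max_eq_left (by linarith : x ≤ x + w)]
          ring
      exact continuous_coe_real_ereal.comp hF
  -- (d)
  · intro w₁ w₂ hw1 hlt12 y
    have hw2 : (0:ℝ) ≤ w₂ := by linarith
    have hb1 : h (x + w₁) ≠ ⊥ := hBotle x _ (by linarith) hx
    have hb2 : h (x + w₂) ≠ ⊥ := hBotle x _ (by linarith) hx
    have key : 0 ≤ G8 H x c w₂ y - G8 H x c w₁ y ∧
        G8 H x c w₂ y - G8 H x c w₁ y ≤ H (x + w₁) + c * (w₂ - w₁) - H (x + w₂) := by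
      have hB := T2 (x + w₁) (x + w₂) (by linarith) (by linarith)
      by_cases h1 : y ≤ x + w₁
      · have h2 : y ≤ x + w₂ := by linarith
        simp only [G8, if_pos h1, if_pos h2]
        constructor
        · linarith
        · nlinarith [hB]
      · push_neg at h1
        by_cases h2 : y ≤ x + w₂
        · simp only [G8, if_neg (not_le.mpr h1), if_pos h2]
          have hA := T2 (x + w₁) y (by linarith) (by linarith)
          have hC := T2 y (x + w₂) (by linarith) h2
          constructor
          · nlinarith [hA]
          · nlinarith [hC]
        · simp only [G8, if_neg (not_le.mpr h1), if_neg h2]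
          constructor
          · nlinarith [hB]
          · nlinarith [hB]
    rw [hwG w₂ hw2 y, hwG w₁ hw1 y, hfin' _ hb1, hfin' _ hb2]
    constructor
    · rw [← EReal.coe_sub]
      exact_mod_cast key.1
    · rw [← EReal.coe_sub, ← EReal.coe_add, ← EReal.coe_sub]
      exact_mod_cast key.2
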